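/- Let u† ∈ L^∞(0,1) be fixed, let c₁ = exp(−‖Gu†‖_∞), and let F be the nonlinear operator [F(u)](x) = exp((Gu)(x)). Then for every ε with 0 < ε < c₁ and every u ∈ L^∞(0,1) with ‖F(u) − F(u†)‖_∞ ≤ c₁ − ε one has ε ‖G(u − u†)‖_∞ ≤ ‖F(u) − F(u†)‖_∞. In particular, the nonlinearity condition c_a ‖u − u†‖_{-1} ≤ ‖F(u) − F(u†)‖ of Assumption 2.1(g) holds with a = 1 and c_a = ε. -/

import Mathlib

open MeasureTheory ENNReal

lemma aux_ae_norm_le {μ : Measure ℝ} {f : ℝ → ℝ} (hfin : eLpNorm f ⊤ μ ≠ ⊤) :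
    ∀ᵐ x ∂μ, ‖f x‖ ≤ (eLpNorm f ⊤ μ).toReal := by
  filter_upwards [enorm_ae_le_eLpNormEssSup f μ] with x hx
  have h2 : ((‖f x‖₊ : ℝ≥0∞)).toReal ≤ (eLpNorm f ⊤ μ).toReal :=
    ENNReal.toReal_mono hfin (by rw [eLpNorm_exponent_top]; exact hx)
  simpa using h2

lemma aux_mul_le {ν : Measure ℝ} {f g : ℝ → ℝ} {ε : ℝ} (hε : 0 < ε)
    (h : ∀ᵐ x ∂ν, ε * ‖f x - g x‖ ≤ ‖Real.exp (f x) - Real.exp (g x)‖) :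
    ENNReal.ofReal ε * eLpNorm (fun x => f x - g x) ⊤ ν ≤
      eLpNorm (fun x => Real.exp (f x) - Real.exp (g x)) ⊤ ν := by
  have h1 : ENNReal.ofReal ε * eLpNorm (fun x => f x - g x) ⊤ ν =
      eLpNorm (fun x => ε * (f x - g x)) ⊤ ν := by
    rw [show (fun x => ε * (f x - g x)) = ε • (fun x => f x - g x) from rfl,
      eLpNorm_const_smul]
    congr 1
    simp [Real.enorm_eq_ofReal hε.le]
  rw [h1]
  refine eLpNorm_mono_ae (h.mono fun x hx => ?_)
  simpa [Real.norm_eq_abs, abs_mul, abs_of_pos hε] using hx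

lemma aux_pointwise {a b ε M : ℝ} (hε : 0 < ε) (hεc : ε < Real.exp (-M))
    (hb : |b| ≤ M) (hcl : |Real.exp a - Real.exp b| ≤ Real.exp (-M) - ε) :
    ε * |a - b| ≤ |Real.exp a - Real.exp b| := by
  have hbM : -M ≤ b := neg_le_of_abs_le hb
  have heb : Real.exp (-M) ≤ Real.exp b := Real.exp_le_exp.mpr hbM
  have hea : ε ≤ Real.exp a := by
    have h1 : Real.exp b - Real.exp a ≤ |Real.exp a - Real.exp b| := by
      rw [abs_sub_comm]; exact le_abs_self _
    linarith
  rcases le_total a b with hab | hab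
  · have h3 : (b - a) + 1 ≤ Real.exp (b - a) := Real.add_one_le_exp _
    have h4 : Real.exp b = Real.exp a * Real.exp (b - a) := by
      rw [← Real.exp_add]; ring_nf
    have hle : Real.exp a ≤ Real.exp b := Real.exp_le_exp.mpr hab
    rw [abs_of_nonpos (by linarith), abs_of_nonpos (by linarith)]
    nlinarith [Real.exp_pos a]
  · have h3 : (a - b) + 1 ≤ Real.exp (a - b) := Real.add_one_le_exp _
    have h4 : Real.exp a = Real.exp b * Real.exp (a - b) := by
      rw [← Real.exp_add]; ring_nf
    have hle : Real.exp b ≤ Real.exp a := Real.exp_le_exp.mpr hab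
    rw [abs_of_nonneg (by linarith), abs_of_nonneg (by linarith)]
    nlinarith [Real.exp_pos b, heb.trans hle, hεc.le]

theorem exponential_forward_operator_nonlinearity_lower
    (udag : ℝ → ℝ) (hudag : MemLp udag ⊤ (volume.restrict (Set.Ioo 0 1)))
    (ε : ℝ) (hε : 0 < ε)
    (hεc : ε < Real.exp (-(eLpNorm (fun x => ∫ t in (0:ℝ)..x, udag t) ⊤
      (volume.restrict (Set.Ioo 0 1))).toReal))
    (u : ℝ → ℝ) (hu : MemLp u ⊤ (volume.restrict (Set.Ioo 0 1)))
    (hclose : eLpNorm (fun x => Real.exp (∫ t in (0:ℝ)..x, u t) -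
        Real.exp (∫ t in (0:ℝ)..x, udag t)) ⊤ (volume.restrict (Set.Ioo 0 1)) ≤
      ENNReal.ofReal (Real.exp (-(eLpNorm (fun x => ∫ t in (0:ℝ)..x, udag t) ⊤
        (volume.restrict (Set.Ioo 0 1))).toReal) - ε)) :
    ENNReal.ofReal ε *
        eLpNorm (fun x => (∫ t in (0:ℝ)..x, u t) - ∫ t in (0:ℝ)..x, udag t) ⊤
          (volume.restrict (Set.Ioo 0 1)) ≤
      eLpNorm (fun x => Real.exp (∫ t in (0:ℝ)..x, u t) -
        Real.exp (∫ t in (0:ℝ)..x, udag t)) ⊤ (volume.restrict (Set.Ioo 0 1)) := by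
  set ν := volume.restrict (Set.Ioo (0:ℝ) 1) with hνdef
  set Gd : ℝ → ℝ := fun x => ∫ t in (0:ℝ)..x, udag t with hGddef
  set Gu : ℝ → ℝ := fun x => ∫ t in (0:ℝ)..x, u t with hGudef
  set M : ℝ := (eLpNorm Gd ⊤ ν).toReal with hMdef
  -- bound on udag
  set C : ℝ := (eLpNorm udag ⊤ ν).toReal with hCdef
  have hC0 : 0 ≤ C := ENNReal.toReal_nonneg
  have hCae : ∀ᵐ x ∂ν, ‖udag x‖ ≤ C := aux_ae_norm_le hudag.2.ne
  have hCae' : ∀ᵐ x ∂(volume : Measure ℝ), x ∈ Set.Ioo (0:ℝ) 1 → ‖udag x‖ ≤ C :=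
    (ae_restrict_iff' measurableSet_Ioo).mp hCae
  -- pointwise bound on Gd
  have hGdb : ∀ x ∈ Set.Ioo (0:ℝ) 1, ‖Gd x‖ ≤ C := by
    intro x hx
    have hb : ‖∫ t in (0:ℝ)..x, udag t‖ ≤ C * |x - 0| := by
      refine intervalIntegral.norm_integral_le_of_norm_le_const_ae ?_
      filter_upwards [hCae'] with t ht hmem
      refine ht ?_
      rw [Set.uIoc_of_le hx.1.le] at hmem
      exact ⟨hmem.1, hmem.2.trans_lt hx.2⟩
    have : C * |x - 0| ≤ C := by
      rw [sub_zero, abs_of_pos hx.1]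
      nlinarith [hx.1, hx.2]
    exact le_trans hb this
  have hGdfin : eLpNorm Gd ⊤ ν ≠ ⊤ := by
    have hle : eLpNorm Gd ⊤ ν ≤ ENNReal.ofReal C := by
      rw [eLpNorm_exponent_top]
      exact eLpNormEssSup_le_of_ae_bound (C := C)
        ((ae_restrict_iff' measurableSet_Ioo).mpr (Filter.Eventually.of_forall hGdb))
    exact ne_top_of_le_ne_top ENNReal.ofReal_ne_top hle
  have hGdM : ∀ᵐ x ∂ν, ‖Gd x‖ ≤ M := aux_ae_norm_le hGdfin
  -- bound from hclose
  have hεM : ε < Real.exp (-M) := hεc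
  have hclAe : ∀ᵐ x ∂ν, ‖Real.exp (Gu x) - Real.exp (Gd x)‖ ≤ Real.exp (-M) - ε := by
    filter_upwards [enorm_ae_le_eLpNormEssSup
      (fun x => Real.exp (Gu x) - Real.exp (Gd x)) ν] with x hx
    have h1 : ((‖Real.exp (Gu x) - Real.exp (Gd x)‖₊ : ℝ≥0∞)) ≤
        ENNReal.ofReal (Real.exp (-M) - ε) := by
      refine hx.trans ?_
      rw [← eLpNorm_exponent_top]
      exact hclose
    have h2 := ENNReal.toReal_mono ENNReal.ofReal_ne_top h1
    rw [ENNReal.toReal_ofReal (by linarith)] at h2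
    simpa using h2
  refine aux_mul_le hε ?_
  filter_upwards [hGdM, hclAe] with x h1 h2
  simpa [Real.norm_eq_abs] using
    aux_pointwise hε hεM (by simpa [Real.norm_eq_abs] using h1) (by
      simpa [Real.norm_eq_abs] using h2)
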